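/- There exists a universal constant c > 0 with the following property: for every R ∈ (0, ∞], every ε > 0 and every X ≥ 2ε, the solution ξ_{ε,R} of the initial value problem ξ_{ε,R}(0) = 0, ξ_{ε,R}' = (1/ε)(1 − ξ_{ε,R}²)^{1/2}(1 − ξ_{ε,R}² + (πε/(2R))²)^{1/2} satisfies the nonlocal lower bound ∫_{−X}^{X} ∫_{−X}^{X} |ξ_{ε,R}(x) − ξ_{ε,R}(y)|²/|x−y|² dx dy ≥ 8 log(c X/ε). -/

import Mathlib

open Real MeasureTheory ENNReal

noncomputable section

/-- The coefficient `πε/(2R)` appearing in the optimal profile ODE, with the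
convention that it is `0` for `R = ∞`. -/
def odeCoeff (ε : ℝ) (R : ℝ≥0∞) : ℝ :=
  if R = ⊤ then 0 else π * ε / (2 * R.toReal)

lemma tau_hasDerivAt {ε : ℝ} (hε : 0 < ε) (x : ℝ) :
    HasDerivAt (fun x => 1 - 2 / (Real.exp (2*x/ε) + 1))
      (ε⁻¹ * (1 - (1 - 2 / (Real.exp (2*x/ε) + 1))^2)) x := by
  have h1 : HasDerivAt (fun x : ℝ => 2*x/ε) (2/ε) x := by
    simpa using ((hasDerivAt_id x).const_mul 2).div_const ε
  have hE : HasDerivAt (fun x => Real.exp (2*x/ε) + 1) (Real.exp (2*x/ε) * (2/ε)) x :=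
    h1.exp.add_const 1
  have hne : Real.exp (2*x/ε) + 1 ≠ 0 := by positivity
  have h2 := (hasDerivAt_const x (2:ℝ)).div hE hne
  have h3 := h2.const_sub 1
  refine h3.congr_deriv ?_
  have he : (0:ℝ) < Real.exp (2*x/ε) := Real.exp_pos _
  field_simp
  ring

lemma comparison {ε : ℝ} (hε : 0 < ε) {ξ d : ℝ → ℝ}
    (hd : ∀ x, HasDerivAt ξ (d x) x)
    (hdn : ∀ x, ε⁻¹ * (1 - ξ x ^ 2) ≤ d x)
    (h0 : ξ 0 = 0) :
    ∀ x : ℝ, (0 ≤ x → 1 - 2 / (Real.exp (2*x/ε) + 1) ≤ ξ x) ∧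
      (x ≤ 0 → ξ x ≤ 1 - 2 / (Real.exp (2*x/ε) + 1)) := by
  set τ : ℝ → ℝ := fun x => 1 - 2 / (Real.exp (2*x/ε) + 1) with hτ
  have hτd : ∀ x, HasDerivAt τ (ε⁻¹ * (1 - τ x ^ 2)) x := fun x => tau_hasDerivAt hε x
  have hξc : Continuous ξ := by
    rw [continuous_iff_continuousAt]; exact fun x => (hd x).continuousAt
  have hτc : Continuous τ := by
    rw [continuous_iff_continuousAt]; exact fun x => (hτd x).continuousAt
  set μ : ℝ → ℝ := fun x => -(ε⁻¹ * (τ x + ξ x)) with hμ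
  have hμc : Continuous μ := by continuity
  set M : ℝ → ℝ := fun x => ∫ t in (0:ℝ)..x, μ t with hM
  have hMd : ∀ x, HasDerivAt M (μ x) x := by
    intro x
    exact intervalIntegral.integral_hasDerivAt_right (hμc.intervalIntegrable 0 x)
      hμc.stronglyMeasurable.stronglyMeasurableAtFilter hμc.continuousAt
  set F : ℝ → ℝ := fun x => (ξ x - τ x) * Real.exp (-(M x)) with hF
  have hFd : ∀ x, HasDerivAt F
      ((d x - ε⁻¹ * (1 - τ x ^ 2)) * Real.exp (-(M x))
        + (ξ x - τ x) * (Real.exp (-(M x)) * -(μ x))) x := by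
    intro x
    exact ((hd x).sub (hτd x)).mul ((hMd x).neg.exp)
  have hF0 : ∀ x, 0 ≤ (d x - ε⁻¹ * (1 - τ x ^ 2)) * Real.exp (-(M x))
        + (ξ x - τ x) * (Real.exp (-(M x)) * -(μ x)) := by
    intro x
    have he : (0:ℝ) < Real.exp (-(M x)) := Real.exp_pos _
    have h1 := hdn x
    have key : 0 ≤ (d x - ε⁻¹ * (1 - τ x ^ 2)) + (ξ x - τ x) * -(μ x) := by
      have : (d x - ε⁻¹ * (1 - τ x ^ 2)) + (ξ x - τ x) * -(μ x)
          = d x - ε⁻¹ * (1 - ξ x ^ 2) := by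
        simp only [hμ, hτ]; ring
      rw [this]; linarith
    nlinarith [he.le]
  have hmono : Monotone F := by
    apply monotone_of_deriv_nonneg
    · exact fun x => (hFd x).differentiableAt
    · intro x; rw [(hFd x).deriv]; exact hF0 x
  have hτ0 : τ 0 = 0 := by simp [hτ]; norm_num
  have hF0v : F 0 = 0 := by simp [hF, h0, hτ0]
  intro x
  constructor
  · intro hx
    have h1 := hmono hx
    rw [hF0v] at h1
    simp only [hF] at h1
    have he : (0:ℝ) < Real.exp (-(M x)) := Real.exp_pos _
    have h2 : (0:ℝ) ≤ ξ x - τ x := nonneg_of_mul_nonneg_right (by nlinarith [h1] : (0:ℝ) ≤ Real.exp (-(M x)) * (ξ x - τ x)) he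
    have : τ x ≤ ξ x := by linarith
    exact this
  · intro hx
    have h1 := hmono hx
    rw [hF0v] at h1
    simp only [hF] at h1
    have he : (0:ℝ) < Real.exp (-(M x)) := Real.exp_pos _
    have h2 : ξ x - τ x ≤ 0 := by nlinarith
    have : ξ x ≤ τ x := by linarith
    exact this


lemma expInt {ε : ℝ} (hε : 0 < ε) (a b : ℝ) :
    ∫ y in a..b, Real.exp (2*y/ε) = ε/2 * Real.exp (2*b/ε) - ε/2 * Real.exp (2*a/ε) := by
  have h : ∀ y ∈ Set.uIcc a b, HasDerivAt (fun y => ε/2 * Real.exp (2*y/ε))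
      (Real.exp (2*y/ε)) y := by
    intro y _
    have h1 : HasDerivAt (fun y : ℝ => 2*y/ε) (2/ε) y := by
      simpa using ((hasDerivAt_id y).const_mul 2).div_const ε
    have := h1.exp.const_mul (ε/2)
    refine this.congr_deriv ?_
    field_simp
  rw [intervalIntegral.integral_eq_sub_of_hasDerivAt h
    ((Real.continuous_exp.comp (by continuity)).continuousOn.intervalIntegrable)]

lemma expNegInt {ε : ℝ} (hε : 0 < ε) (a b : ℝ) :
    ∫ y in a..b, Real.exp (-(2*y/ε))
      = ε/2 * Real.exp (-(2*a/ε)) - ε/2 * Real.exp (-(2*b/ε)) := by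
  have h : ∀ y ∈ Set.uIcc a b, HasDerivAt (fun y => -(ε/2) * Real.exp (-(2*y/ε)))
      (Real.exp (-(2*y/ε))) y := by
    intro y _
    have h1 : HasDerivAt (fun y : ℝ => -(2*y/ε)) (-(2/ε)) y := by
      have h0 : HasDerivAt (fun y : ℝ => 2*y/ε) (2/ε) y := by
        simpa using ((hasDerivAt_id y).const_mul 2).div_const ε
      exact h0.neg
    have := h1.exp.const_mul (-(ε/2))
    refine this.congr_deriv ?_
    field_simp
  rw [intervalIntegral.integral_eq_sub_of_hasDerivAt h
    ((Real.continuous_exp.comp (by continuity)).continuousOn.intervalIntegrable)]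
  ring

lemma invSqInt {x a b : ℝ} (h : ∀ y ∈ Set.uIcc a b, x - y ≠ 0) :
    ∫ y in a..b, ((x - y)^2)⁻¹ = (x - b)⁻¹ - (x - a)⁻¹ := by
  have hder : ∀ y ∈ Set.uIcc a b, HasDerivAt (fun y => (x - y)⁻¹) (((x - y)^2)⁻¹) y := by
    intro y hy
    have h1 : HasDerivAt (fun y : ℝ => x - y) (-1) y := by
      simpa using (hasDerivAt_id y).const_sub x
    have := h1.inv (h y hy)
    refine this.congr_deriv ?_
    field_simp
  refine intervalIntegral.integral_eq_sub_of_hasDerivAt hder ?_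
  apply ContinuousOn.intervalIntegrable
  apply ContinuousOn.inv₀
  · fun_prop
  · intro y hy
    exact pow_ne_zero 2 (h y hy)

lemma invInt {c a b : ℝ} (h : ∀ x ∈ Set.uIcc a b, 0 < x + c) :
    ∫ x in a..b, (x + c)⁻¹ = Real.log (b + c) - Real.log (a + c) := by
  have hder : ∀ x ∈ Set.uIcc a b, HasDerivAt (fun x => Real.log (x + c)) ((x + c)⁻¹) x := by
    intro x hx
    have h1 : HasDerivAt (fun x : ℝ => x + c) 1 x := (hasDerivAt_id x).add_const c
    have := h1.log (h x hx).ne'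
    simpa using this
  refine intervalIntegral.integral_eq_sub_of_hasDerivAt hder ?_
  apply ContinuousOn.intervalIntegrable
  apply ContinuousOn.inv₀
  · fun_prop
  · intro x hx
    exact (h x hx).ne'

lemma invSqInt' {c a b : ℝ} (h : ∀ x ∈ Set.uIcc a b, x + c ≠ 0) :
    ∫ x in a..b, ((x + c)^2)⁻¹ = (a + c)⁻¹ - (b + c)⁻¹ := by
  have hder : ∀ x ∈ Set.uIcc a b, HasDerivAt (fun x => -(x + c)⁻¹) (((x + c)^2)⁻¹) x := by
    intro x hx
    have h1 : HasDerivAt (fun x : ℝ => x + c) 1 x := (hasDerivAt_id x).add_const c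
    have := (h1.inv (h x hx)).neg
    refine this.congr_deriv ?_
    field_simp
  rw [intervalIntegral.integral_eq_sub_of_hasDerivAt hder ?_]
  · ring
  apply ContinuousOn.intervalIntegrable
  apply ContinuousOn.inv₀
  · fun_prop
  · intro x hx
    exact pow_ne_zero 2 (h x hx)


lemma exp_neg_two_le_half : Real.exp (-2 : ℝ) ≤ 1/2 := by
  rw [Real.exp_neg]
  rw [inv_le_comm₀ (Real.exp_pos 2) (by norm_num)]
  have := Real.add_one_le_exp (2:ℝ)
  norm_num at this ⊢
  linarith


set_option maxHeartbeats 1000000 in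
lemma quadrant {ε X : ℝ} (hε : 0 < ε) (hX : 2*ε ≤ X) {ξ : ℝ → ℝ}
    (hc : Continuous ξ)
    (hb : ∀ x, |ξ x| ≤ 1)
    (B1 : ∀ x, ε ≤ x → 1 - 2*Real.exp (-(2*x/ε)) ≤ ξ x)
    (B2 : ∀ y, y ≤ -ε → ξ y ≤ -1 + 2*Real.exp (2*y/ε)) :
    4*Real.log X - 4*Real.log ε - 8*Real.log 2 - 4*Real.exp (-2)
      ≤ ∫ x in Set.Ioo ε X, ∫ y in Set.Ioo (-X) (-ε), (ξ x - ξ y)^2 / (x - y)^2 := by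
  have hεX : ε < X := by linarith
  have hmX : -X < -ε := by linarith
  have hXpos : 0 < X := by linarith
  set φ : ℝ → ℝ := fun x => 4*((x+ε)⁻¹ - (x+X)⁻¹) - 8*Real.exp (-(2*x/ε))*(x+ε)⁻¹
      - 4*ε*Real.exp (-2) * ((x+ε)^2)⁻¹ with hφdef
  -- continuity facts
  have h0 : ∀ x ∈ Set.Icc ε X, x + ε ≠ 0 := fun x hx => by nlinarith [hx.1]
  have h0' : ∀ x ∈ Set.Icc ε X, x + X ≠ 0 := fun x hx => by nlinarith [hx.1]
  have hφc : ContinuousOn φ (Set.Icc ε X) := by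
    have h1 : ContinuousOn (fun x : ℝ => (x+ε)⁻¹) (Set.Icc ε X) :=
      ContinuousOn.inv₀ (by fun_prop) h0
    have h2 : ContinuousOn (fun x : ℝ => (x+X)⁻¹) (Set.Icc ε X) :=
      ContinuousOn.inv₀ (by fun_prop) h0'
    have h3 : ContinuousOn (fun x : ℝ => ((x+ε)^2)⁻¹) (Set.Icc ε X) :=
      ContinuousOn.inv₀ (by fun_prop) (fun x hx => pow_ne_zero 2 (h0 x hx))
    have h4 : Continuous fun x : ℝ => Real.exp (-(2*x/ε)) := by continuity
    rw [hφdef]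
    exact ((continuousOn_const.mul (h1.sub h2)).sub
      ((continuousOn_const.mul h4.continuousOn).mul h1)).sub (continuousOn_const.mul h3)
  -- measurability of H
  have hHm : Measurable (fun p : ℝ × ℝ => (ξ p.1 - ξ p.2)^2 / (p.1 - p.2)^2) := by
    apply Measurable.div
    · fun_prop
    · fun_prop
  -- bound on quadrant
  have hbnd : ∀ x ∈ Set.Ioo ε X, ∀ y ∈ Set.Ioo (-X) (-ε),
      (ξ x - ξ y)^2 / (x - y)^2 ≤ (ε^2)⁻¹ := by
    intro x hx y hy
    have h1 : 2*ε ≤ x - y := by have := hx.1; have := hy.2; linarith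
    have h2 : (0:ℝ) < (x - y)^2 := by nlinarith
    rw [div_le_iff₀ h2]
    have h3 := hb x; have h4 := hb y
    have h5 := abs_le.1 h3; have h6 := abs_le.1 h4
    have h7 : (ξ x - ξ y)^2 ≤ 4 := by nlinarith
    have h8 : 4*ε^2 ≤ (x-y)^2 := by nlinarith
    have h9 : (0:ℝ) < ε^2 := by positivity
    calc (ξ x - ξ y)^2 ≤ 4 := h7
      _ = (ε^2)⁻¹ * (4*ε^2) := by field_simp
      _ ≤ (ε^2)⁻¹ * (x-y)^2 := by
          apply mul_le_mul_of_nonneg_left h8 (by positivity)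
  -- integrability of H on the product
  have hfin1 : IsFiniteMeasure (volume.restrict (Set.Ioo ε X)) :=
    ⟨by rw [Measure.restrict_apply_univ]; exact measure_Ioo_lt_top⟩
  have hfin2 : IsFiniteMeasure (volume.restrict (Set.Ioo (-X) (-ε))) :=
    ⟨by rw [Measure.restrict_apply_univ]; exact measure_Ioo_lt_top⟩
  have hprod : Integrable (fun p : ℝ × ℝ => (ξ p.1 - ξ p.2)^2 / (p.1 - p.2)^2)
      ((volume.restrict (Set.Ioo ε X)).prod (volume.restrict (Set.Ioo (-X) (-ε)))) := by
    apply Integrable.mono' (g := fun _ => (ε^2)⁻¹) (integrable_const _)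
      hHm.aestronglyMeasurable
    rw [Measure.prod_restrict]
    filter_upwards [ae_restrict_mem (measurableSet_Ioo.prod measurableSet_Ioo)] with p hp
    rw [Real.norm_eq_abs, abs_of_nonneg (by positivity)]
    exact hbnd p.1 hp.1 p.2 hp.2
  have hF1int : IntegrableOn (fun x => ∫ y in Set.Ioo (-X) (-ε), (ξ x - ξ y)^2 / (x - y)^2)
      (Set.Ioo ε X) := hprod.integral_prod_left
  -- inner pointwise bound
  have hinner : ∀ x ∈ Set.Ioo ε X,
      φ x ≤ ∫ y in Set.Ioo (-X) (-ε), (ξ x - ξ y)^2 / (x - y)^2 := by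
    intro x hx
    have hx1 : ε < x := hx.1
    have hx2 : x < X := hx.2
    have hxε : (0:ℝ) < x + ε := by linarith
    set u := Real.exp (-(2*x/ε)) with hu
    have hu2 : u ≤ Real.exp (-2) := by
      apply Real.exp_le_exp.2
      rw [neg_le_neg_iff, le_div_iff₀ hε]
      linarith
    have huhalf : u ≤ 1/2 := hu2.trans exp_neg_two_le_half
    have hu0 : 0 < u := Real.exp_pos _
    rw [← MeasureTheory.integral_Ioc_eq_integral_Ioo, ← intervalIntegral.integral_of_le hmX.le]
    have hexp2 : Continuous (fun y : ℝ => Real.exp (2*y/ε)) :=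
      Real.continuous_exp.comp ((continuous_const.mul continuous_id).div_const ε)
    have hden : Continuous (fun y : ℝ => (x - y)^2) := (continuous_const.sub continuous_id).pow 2
    set lo : ℝ → ℝ := fun y => (4 - 8*u) * ((x - y)^2)⁻¹
        - 8*(Real.exp (2*y/ε) * ((x - y)^2)⁻¹) with hlo
    have hne : ∀ y ∈ Set.uIcc (-X) (-ε), x - y ≠ 0 := by
      intro y hy
      rw [Set.uIcc_of_le hmX.le] at hy
      have := hy.2; nlinarith
    have hinv_cont : ContinuousOn (fun y : ℝ => ((x - y)^2)⁻¹) (Set.uIcc (-X) (-ε)) := by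
      apply ContinuousOn.inv₀ hden.continuousOn
      intro y hy; exact pow_ne_zero 2 (hne y hy)
    have hI1 : IntervalIntegrable (fun y : ℝ => ((x - y)^2)⁻¹) volume (-X) (-ε) :=
      hinv_cont.intervalIntegrable
    have hI2 : IntervalIntegrable (fun y : ℝ => Real.exp (2*y/ε) * ((x - y)^2)⁻¹)
        volume (-X) (-ε) :=
      ((hexp2.continuousOn).mul hinv_cont).intervalIntegrable
    have hIlo : IntervalIntegrable lo volume (-X) (-ε) := by
      apply IntervalIntegrable.sub
      · exact hI1.const_mul _
      · exact hI2.const_mul _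
    have hIH : IntervalIntegrable (fun y => (ξ x - ξ y)^2 / (x - y)^2) volume (-X) (-ε) := by
      apply ContinuousOn.intervalIntegrable
      apply ContinuousOn.div ((continuous_const.sub hc).pow 2).continuousOn hden.continuousOn
      intro y hy; exact pow_ne_zero 2 (hne y hy)
    have hptwise : ∀ y ∈ Set.Icc (-X) (-ε), lo y ≤ (ξ x - ξ y)^2 / (x - y)^2 := by
      intro y hy
      set v := Real.exp (2*y/ε) with hv
      have hv2 : v ≤ Real.exp (-2) := by
        apply Real.exp_le_exp.2
        rw [div_le_iff₀ hε]
        have := hy.2; nlinarith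
      have hvhalf : v ≤ 1/2 := hv2.trans exp_neg_two_le_half
      have hv0 : 0 < v := Real.exp_pos _
      have hA := B1 x hx1.le
      have hB := B2 y hy.2
      have hd : 2 - 2*u - 2*v ≤ ξ x - ξ y := by rw [← hu] at hA; rw [← hv] at hB; linarith
      have hd0 : (0:ℝ) ≤ 2 - 2*u - 2*v := by linarith
      have hsq : 4 - 8*u - 8*v ≤ (ξ x - ξ y)^2 := by nlinarith
      have hxy : (0:ℝ) < x - y := by have := hy.2; nlinarith
      have : lo y = (4 - 8*u - 8*v) * ((x - y)^2)⁻¹ := by rw [hlo]; ring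
      rw [this, div_eq_mul_inv]
      exact mul_le_mul_of_nonneg_right hsq (by positivity)
    have hmono := intervalIntegral.integral_mono_on hmX.le hIlo hIH hptwise
    -- compute the integral of lo
    have hK : ∫ y in (-X)..(-ε), ((x - y)^2)⁻¹ = (x + ε)⁻¹ - (x + X)⁻¹ := by
      have := invSqInt hne
      simpa [sub_neg_eq_add] using this
    have hJbound : ∫ y in (-X)..(-ε), Real.exp (2*y/ε) * ((x - y)^2)⁻¹
        ≤ ((x + ε)^2)⁻¹ * (ε/2 * Real.exp (-2)) := by
      have hJ1 : ∫ y in (-X)..(-ε), Real.exp (2*y/ε) * ((x - y)^2)⁻¹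
          ≤ ∫ y in (-X)..(-ε), Real.exp (2*y/ε) * ((x + ε)^2)⁻¹ := by
        apply intervalIntegral.integral_mono_on hmX.le hI2
          ((hexp2.continuousOn.mul continuousOn_const).intervalIntegrable)
        intro y hy
        apply mul_le_mul_of_nonneg_left _ (Real.exp_pos _).le
        apply inv_anti₀ (by positivity)
        have h1 : x + ε ≤ x - y := by have := hy.2; linarith
        nlinarith
      have hJ2 : ∫ y in (-X)..(-ε), Real.exp (2*y/ε) * ((x + ε)^2)⁻¹
          = (ε/2 * Real.exp (-(2*ε/ε)) - ε/2 * Real.exp (-(2*X/ε))) * ((x + ε)^2)⁻¹ := by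
        rw [intervalIntegral.integral_mul_const, expInt hε]
        ring_nf
      rw [hJ2] at hJ1
      refine hJ1.trans ?_
      have hεε : 2*ε/ε = 2 := by field_simp
      rw [hεε]
      have : (0:ℝ) ≤ ((x+ε)^2)⁻¹ := by positivity
      nlinarith [mul_nonneg (by positivity : (0:ℝ) ≤ ε/2 * Real.exp (-(2*X/ε))) this]
    have hloint : (4 - 8*u) * ((x + ε)⁻¹ - (x + X)⁻¹)
        - 8*(((x + ε)^2)⁻¹ * (ε/2 * Real.exp (-2))) ≤ ∫ y in (-X)..(-ε), lo y := by
      rw [hlo]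
      rw [intervalIntegral.integral_sub (hI1.const_mul _) (hI2.const_mul _),
        intervalIntegral.integral_const_mul, intervalIntegral.integral_const_mul, hK]
      have h48 : (0:ℝ) ≤ 4 - 8*u := by linarith
      nlinarith [hJbound]
    refine le_trans ?_ (le_trans hloint hmono)
    -- φ x ≤ the explicit lower value
    have hxX : (0:ℝ) < x + X := by linarith
    have hKle : (x + ε)⁻¹ - (x + X)⁻¹ ≤ (x + ε)⁻¹ := by
      have : (0:ℝ) < (x + X)⁻¹ := by positivity
      linarith
    have hK0 : (0:ℝ) ≤ (x + ε)⁻¹ - (x + X)⁻¹ := by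
      have : (x + X)⁻¹ ≤ (x + ε)⁻¹ := by
        apply inv_anti₀ hxε; linarith
      linarith
    rw [hφdef]
    have expand : (4 - 8*u) * ((x + ε)⁻¹ - (x + X)⁻¹)
        = 4*((x + ε)⁻¹ - (x + X)⁻¹) - 8*u*((x + ε)⁻¹ - (x + X)⁻¹) := by ring
    have h8u : 8*u*((x + ε)⁻¹ - (x + X)⁻¹) ≤ 8*u*(x + ε)⁻¹ :=
      mul_le_mul_of_nonneg_left hKle (by linarith)
    have heq2 : 8*(((x + ε)^2)⁻¹ * (ε/2 * Real.exp (-2))) = 4*ε*Real.exp (-2)*((x+ε)^2)⁻¹ := by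
      ring
    simp only [expand, heq2]
    linarith
  -- outer comparison
  have hφint : IntegrableOn φ (Set.Ioo ε X) :=
    (hφc.integrableOn_Icc).mono_set Set.Ioo_subset_Icc_self
  have hstep : ∫ x in Set.Ioo ε X, φ x
      ≤ ∫ x in Set.Ioo ε X, ∫ y in Set.Ioo (-X) (-ε), (ξ x - ξ y)^2 / (x - y)^2 :=
    setIntegral_mono_on hφint hF1int measurableSet_Ioo hinner
  refine le_trans ?_ hstep
  rw [← MeasureTheory.integral_Ioc_eq_integral_Ioo, ← intervalIntegral.integral_of_le hεX.le]
  have huicc : Set.uIcc ε X = Set.Icc ε X := Set.uIcc_of_le hεX.le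
  have hg1 : ∀ x ∈ Set.uIcc ε X, 0 < x + ε := by
    rw [huicc]; intro x hx; nlinarith [hx.1]
  have hg2 : ∀ x ∈ Set.uIcc ε X, 0 < x + X := by
    rw [huicc]; intro x hx; nlinarith [hx.1]
  have hc1 : ContinuousOn (fun x : ℝ => (x+ε)⁻¹) (Set.uIcc ε X) :=
    ContinuousOn.inv₀ (by fun_prop) (fun x hx => (hg1 x hx).ne')
  have hc2 : ContinuousOn (fun x : ℝ => (x+X)⁻¹) (Set.uIcc ε X) :=
    ContinuousOn.inv₀ (by fun_prop) (fun x hx => (hg2 x hx).ne')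
  have hc3 : ContinuousOn (fun x : ℝ => ((x+ε)^2)⁻¹) (Set.uIcc ε X) :=
    ContinuousOn.inv₀ (by fun_prop) (fun x hx => pow_ne_zero 2 (hg1 x hx).ne')
  have hcexp : Continuous (fun x : ℝ => Real.exp (-(2*x/ε))) :=
    Real.continuous_exp.comp (((continuous_const.mul continuous_id).div_const ε).neg)
  have iA : IntervalIntegrable (fun x : ℝ => 4*((x+ε)⁻¹ - (x+X)⁻¹)) volume ε X :=
    (continuousOn_const.mul (hc1.sub hc2)).intervalIntegrable
  have iC : IntervalIntegrable (fun x : ℝ => 8*Real.exp (-(2*x/ε))*(x+ε)⁻¹) volume ε X :=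
    ((continuousOn_const.mul hcexp.continuousOn).mul hc1).intervalIntegrable
  have iD : IntervalIntegrable (fun x : ℝ => 4*ε*Real.exp (-2)*((x+ε)^2)⁻¹) volume ε X :=
    (continuousOn_const.mul hc3).intervalIntegrable
  have hsplit : ∫ x in ε..X, φ x = (∫ x in ε..X, 4*((x+ε)⁻¹ - (x+X)⁻¹))
      - (∫ x in ε..X, 8*Real.exp (-(2*x/ε))*(x+ε)⁻¹)
      - (∫ x in ε..X, 4*ε*Real.exp (-2)*((x+ε)^2)⁻¹) := by
    rw [← intervalIntegral.integral_sub iA iC, ← intervalIntegral.integral_sub (iA.sub iC) iD]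
  have hA : ∫ x in ε..X, 4*((x+ε)⁻¹ - (x+X)⁻¹)
      = 4*((Real.log (X+ε) - Real.log (ε+ε)) - (Real.log (X+X) - Real.log (ε+X))) := by
    rw [show (fun x : ℝ => 4*((x+ε)⁻¹ - (x+X)⁻¹))
        = fun x : ℝ => (4:ℝ) * ((fun x => (x+ε)⁻¹) x - (fun x => (x+X)⁻¹) x) from rfl,
      intervalIntegral.integral_const_mul,
      intervalIntegral.integral_sub (hc1.intervalIntegrable) (hc2.intervalIntegrable),
      invInt hg1, invInt hg2]
  have hC : ∫ x in ε..X, 8*Real.exp (-(2*x/ε))*(x+ε)⁻¹ ≤ 2*Real.exp (-2) := by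
    have hmono2 : ∫ x in ε..X, 8*Real.exp (-(2*x/ε))*(x+ε)⁻¹
        ≤ ∫ x in ε..X, (8*(2*ε)⁻¹) * Real.exp (-(2*x/ε)) := by
      apply intervalIntegral.integral_mono_on hεX.le iC
        ((continuousOn_const.mul hcexp.continuousOn).intervalIntegrable)
      intro x hx
      have h1 : (x+ε)⁻¹ ≤ (2*ε)⁻¹ := by
        apply inv_anti₀ (by positivity); linarith [hx.1]
      have h2 : (0:ℝ) < Real.exp (-(2*x/ε)) := Real.exp_pos _
      have h3 : (0:ℝ) < (2*ε)⁻¹ := by positivity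
      show 8*Real.exp (-(2*x/ε))*(x+ε)⁻¹ ≤ (8*(2*ε)⁻¹) * Real.exp (-(2*x/ε))
      nlinarith
    refine hmono2.trans ?_
    rw [intervalIntegral.integral_const_mul, expNegInt hε]
    have hεε : 2*ε/ε = 2 := by field_simp
    rw [hεε]
    have h4 : (0:ℝ) < Real.exp (-(2*X/ε)) := Real.exp_pos _
    have h5 : (0:ℝ) < (2*ε)⁻¹ := by positivity
    have h7 : 8*(2*ε)⁻¹*(ε/2*Real.exp (-2) - ε/2*Real.exp (-(2*X/ε)))
        = 2*Real.exp (-2) - 2*Real.exp (-(2*X/ε)) := by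
      field_simp
      ring
    rw [h7]
    linarith
  have hD : ∫ x in ε..X, 4*ε*Real.exp (-2)*((x+ε)^2)⁻¹ ≤ 2*Real.exp (-2) := by
    rw [show (fun x : ℝ => 4*ε*Real.exp (-2)*((x+ε)^2)⁻¹)
        = fun x : ℝ => (4*ε*Real.exp (-2)) * ((fun x => ((x+ε)^2)⁻¹) x) from rfl,
      intervalIntegral.integral_const_mul, invSqInt' (fun x hx => (hg1 x hx).ne')]
    have h1 : (0:ℝ) < X + ε := by linarith
    have h2 : (ε+ε)⁻¹ - (X+ε)⁻¹ ≤ (2*ε)⁻¹ := by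
      have : (0:ℝ) < (X+ε)⁻¹ := by positivity
      have : (ε+ε : ℝ) = 2*ε := by ring
      rw [this]; linarith
    have h3 : (0:ℝ) < 4*ε*Real.exp (-2) := by positivity
    have h4 : (4*ε*Real.exp (-2)) * (2*ε)⁻¹ = 2*Real.exp (-2) := by field_simp; ring
    nlinarith [mul_le_mul_of_nonneg_left h2 h3.le]
  rw [hsplit, hA]
  have hlog1 : Real.log (ε+ε) = Real.log 2 + Real.log ε := by
    rw [show (ε+ε : ℝ) = 2*ε by ring, Real.log_mul (by norm_num) hε.ne']
  have hlog2 : Real.log (X+X) = Real.log 2 + Real.log X := by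
    rw [show (X+X : ℝ) = 2*X by ring, Real.log_mul (by norm_num) hXpos.ne']
  have hlog3 : Real.log X ≤ Real.log (X+ε) := Real.log_le_log hXpos (by linarith)
  have hlog4 : Real.log (ε+X) = Real.log (X+ε) := by rw [add_comm]
  rw [hlog1, hlog2, hlog4]
  linarith


set_option maxHeartbeats 1000000 in
/-- Lemma `le:opt`, nonlocal lower bound: the optimal profile
`ξ_{ε,R}` satisfies a logarithmic lower bound for the nonlocal double integral. -/
theorem stmt_8 :
    ∃ c : ℝ, 0 < c ∧
      ∀ (R : ℝ≥0∞), 0 < R → ∀ ε : ℝ, 0 < ε →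
        ∀ ξ : ℝ → ℝ, (∀ x, ξ x ∈ Set.Icc (-1 : ℝ) 1) → ξ 0 = 0 →
          (∀ x, HasDerivAt ξ
            (ε⁻¹ * Real.sqrt (1 - ξ x ^ 2) *
              Real.sqrt (1 - ξ x ^ 2 + odeCoeff ε R ^ 2)) x) →
          ∀ X : ℝ, 2 * ε ≤ X →
            8 * Real.log (c * X / ε) ≤
              ∫ x in Set.Ioo (-X) X, ∫ y in Set.Ioo (-X) X,
                (ξ x - ξ y) ^ 2 / (x - y) ^ 2 := by
  refine ⟨1/12, by norm_num, ?_⟩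
  intro R hR ε hε ξ hicc h0 hderiv X hX2
  set a := odeCoeff ε R with ha
  set d : ℝ → ℝ := fun x => ε⁻¹ * Real.sqrt (1 - ξ x ^ 2) * Real.sqrt (1 - ξ x ^ 2 + a ^ 2)
    with hd
  have hXpos : 0 < X := by linarith
  have hεX : ε < X := by linarith
  have h1ξ : ∀ x, 0 ≤ 1 - ξ x ^ 2 := fun x => by nlinarith [(hicc x).1, (hicc x).2]
  have hb : ∀ x, |ξ x| ≤ 1 := fun x => abs_le.2 ⟨(hicc x).1, (hicc x).2⟩
  have hc : Continuous ξ := continuous_iff_continuousAt.2 fun x => (hderiv x).continuousAt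
  have hdge : ∀ x, ε⁻¹ * (1 - ξ x ^ 2) ≤ d x := by
    intro x
    have hA := h1ξ x
    have h1 : Real.sqrt (1 - ξ x ^ 2) ≤ Real.sqrt (1 - ξ x ^ 2 + a ^ 2) :=
      Real.sqrt_le_sqrt (by nlinarith [sq_nonneg a])
    have h2 : Real.sqrt (1 - ξ x ^ 2) * Real.sqrt (1 - ξ x ^ 2) = 1 - ξ x ^ 2 :=
      Real.mul_self_sqrt hA
    have h3 : (0:ℝ) ≤ Real.sqrt (1 - ξ x ^ 2) := Real.sqrt_nonneg _
    have h4 : (0:ℝ) ≤ ε⁻¹ := by positivity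
    calc ε⁻¹ * (1 - ξ x ^ 2)
        = ε⁻¹ * (Real.sqrt (1 - ξ x ^ 2) * Real.sqrt (1 - ξ x ^ 2)) := by rw [h2]
      _ ≤ ε⁻¹ * (Real.sqrt (1 - ξ x ^ 2) * Real.sqrt (1 - ξ x ^ 2 + a ^ 2)) :=
          mul_le_mul_of_nonneg_left (mul_le_mul_of_nonneg_left h1 h3) h4
      _ = d x := by rw [hd]; ring
  have hcomp := comparison hε hderiv hdge h0
  have B1 : ∀ x, ε ≤ x → 1 - 2*Real.exp (-(2*x/ε)) ≤ ξ x := by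
    intro x hx
    have h1 := (hcomp x).1 (by linarith)
    have hE : (0:ℝ) < Real.exp (2*x/ε) := Real.exp_pos _
    have h2 : Real.exp (-(2*x/ε)) = (Real.exp (2*x/ε))⁻¹ := Real.exp_neg _
    have h3 : 2/(Real.exp (2*x/ε) + 1) ≤ 2/(Real.exp (2*x/ε)) :=
      div_le_div_of_nonneg_left (by norm_num) hE (by linarith)
    have h4 : 2*Real.exp (-(2*x/ε)) = 2/Real.exp (2*x/ε) := by
      rw [Real.exp_neg]; ring
    rw [h4]
    linarith
  have B2 : ∀ y, y ≤ -ε → ξ y ≤ -1 + 2*Real.exp (2*y/ε) := by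
    intro y hy
    have h1 := (hcomp y).2 (by linarith)
    have hE : (0:ℝ) < Real.exp (2*y/ε) := Real.exp_pos _
    have h3 : 2 - 2*Real.exp (2*y/ε) ≤ 2/(Real.exp (2*y/ε) + 1) := by
      rw [le_div_iff₀ (by positivity)]
      nlinarith
    linarith
  -- Lipschitz bound
  set L := ε⁻¹ * Real.sqrt (1 + a ^ 2) with hL
  have hbd : ∀ x, |d x| ≤ L := by
    intro x
    have h3 : (0:ℝ) ≤ Real.sqrt (1 - ξ x ^ 2) := Real.sqrt_nonneg _
    have h3' : (0:ℝ) ≤ Real.sqrt (1 - ξ x ^ 2 + a ^ 2) := Real.sqrt_nonneg _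
    have h4 : (0:ℝ) ≤ ε⁻¹ := by positivity
    have h5 : Real.sqrt (1 - ξ x ^ 2) ≤ 1 :=
      Real.sqrt_le_one.mpr (by nlinarith [sq_nonneg (ξ x)])
    have h6 : Real.sqrt (1 - ξ x ^ 2 + a ^ 2) ≤ Real.sqrt (1 + a ^ 2) :=
      Real.sqrt_le_sqrt (by nlinarith [sq_nonneg (ξ x)])
    have hdpos : 0 ≤ d x := by simp only [hd]; positivity
    rw [abs_of_nonneg hdpos]
    simp only [hd, hL]
    have h7 : (0:ℝ) ≤ Real.sqrt (1 + a^2) := Real.sqrt_nonneg _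
    have h8 : Real.sqrt (1 - ξ x ^ 2) * Real.sqrt (1 - ξ x ^ 2 + a ^ 2)
        ≤ 1 * Real.sqrt (1 + a ^ 2) := mul_le_mul h5 h6 h3' zero_le_one
    have h9 := mul_le_mul_of_nonneg_left h8 h4
    calc ε⁻¹ * Real.sqrt (1 - ξ x ^ 2) * Real.sqrt (1 - ξ x ^ 2 + a ^ 2)
        = ε⁻¹ * (Real.sqrt (1 - ξ x ^ 2) * Real.sqrt (1 - ξ x ^ 2 + a ^ 2)) := by ring
      _ ≤ ε⁻¹ * (1 * Real.sqrt (1 + a ^ 2)) := h9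
      _ = ε⁻¹ * Real.sqrt (1 + a ^ 2) := by ring
  have hLpos : (0:ℝ) ≤ L := by rw [hL]; positivity
  have hLip : ∀ x y, |ξ x - ξ y| ≤ L * |x - y| := by
    intro x y
    have := Convex.norm_image_sub_le_of_norm_hasDerivWithin_le (f := ξ) (f' := d)
      (s := Set.univ) (fun z _ => (hderiv z).hasDerivWithinAt)
      (fun z _ => by rw [Real.norm_eq_abs]; exact hbd z) convex_univ
      (Set.mem_univ y) (Set.mem_univ x)
    simpa [Real.norm_eq_abs] using this
  have hHbd : ∀ x y : ℝ, (ξ x - ξ y)^2 / (x - y)^2 ≤ L^2 := by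
    intro x y
    rcases eq_or_ne x y with h | h
    · simp [h]; positivity
    · have hden : (0:ℝ) < (x - y)^2 := by
        have : x - y ≠ 0 := sub_ne_zero.2 h
        positivity
      rw [div_le_iff₀ hden]
      have h1 := hLip x y
      have h2 : (0:ℝ) ≤ |ξ x - ξ y| := abs_nonneg _
      nlinarith [sq_abs (ξ x - ξ y), sq_abs (x - y), mul_self_le_mul_self h2 h1]
  have hHnn : ∀ x y : ℝ, 0 ≤ (ξ x - ξ y)^2 / (x - y)^2 := fun x y => by positivity
  have hHm : Measurable (fun p : ℝ × ℝ => (ξ p.1 - ξ p.2)^2 / (p.1 - p.2)^2) :=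
    Measurable.div (by fun_prop) (by fun_prop)
  -- integrability on the box
  set S := Set.Ioo (-X) X with hS
  have hfinS : IsFiniteMeasure (volume.restrict S) :=
    ⟨by rw [Measure.restrict_apply_univ]; exact measure_Ioo_lt_top⟩
  have hprodS : Integrable (fun p : ℝ × ℝ => (ξ p.1 - ξ p.2)^2 / (p.1 - p.2)^2)
      ((volume.restrict S).prod (volume.restrict S)) := by
    apply Integrable.mono' (g := fun _ => L^2) (integrable_const _) hHm.aestronglyMeasurable
    filter_upwards with p
    rw [Real.norm_eq_abs, abs_of_nonneg (hHnn p.1 p.2)]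
    exact hHbd p.1 p.2
  have hFint : IntegrableOn (fun x => ∫ y in S, (ξ x - ξ y)^2 / (x - y)^2) S :=
    hprodS.integral_prod_left
  have hinnerInt : ∀ (x : ℝ) (t : Set ℝ), MeasurableSet t → volume t < ⊤ →
      IntegrableOn (fun y => (ξ x - ξ y)^2 / (x - y)^2) t := by
    intro x t ht htf
    haveI : IsFiniteMeasure (volume.restrict t) :=
      ⟨by rw [Measure.restrict_apply_univ]; exact htf⟩
    have hmy : Measurable fun y : ℝ => (ξ x - ξ y)^2 / (x - y)^2 :=
      Measurable.div (by fun_prop) (by fun_prop)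
    apply Integrable.mono' (g := fun _ => L^2) (integrable_const _) hmy.aestronglyMeasurable
    filter_upwards with y
    rw [Real.norm_eq_abs, abs_of_nonneg (hHnn x y)]
    exact hHbd x y
  have hFnn : ∀ x, 0 ≤ ∫ y in S, (ξ x - ξ y)^2 / (x - y)^2 := fun x =>
    setIntegral_nonneg measurableSet_Ioo fun y _ => hHnn x y
  have hsub1 : Set.Ioo (-X) (-ε) ⊆ S := Set.Ioo_subset_Ioo le_rfl (by linarith)
  have hsub2 : Set.Ioo ε X ⊆ S := Set.Ioo_subset_Ioo (by linarith) le_rfl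
  -- step 1: restrict to the union of the two quadrant strips
  have step1 : ∫ x in Set.Ioo (-X) (-ε) ∪ Set.Ioo ε X, ∫ y in S, (ξ x - ξ y)^2 / (x - y)^2
      ≤ ∫ x in S, ∫ y in S, (ξ x - ξ y)^2 / (x - y)^2 := by
    apply setIntegral_mono_set hFint (Filter.Eventually.of_forall hFnn)
    exact (Set.union_subset hsub1 hsub2).eventuallyLE
  have hdisj : Disjoint (Set.Ioo (-X) (-ε)) (Set.Ioo ε X) := by
    apply Set.disjoint_left.2
    intro z hz1 hz2
    have := hz1.2; have := hz2.1; linarith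
  have step2 : ∫ x in Set.Ioo (-X) (-ε) ∪ Set.Ioo ε X, ∫ y in S, (ξ x - ξ y)^2 / (x - y)^2
      = (∫ x in Set.Ioo (-X) (-ε), ∫ y in S, (ξ x - ξ y)^2 / (x - y)^2)
        + ∫ x in Set.Ioo ε X, ∫ y in S, (ξ x - ξ y)^2 / (x - y)^2 :=
    setIntegral_union hdisj measurableSet_Ioo (hFint.mono_set hsub1) (hFint.mono_set hsub2)
  -- quadrant 1
  have hq1prod : Integrable (fun p : ℝ × ℝ => (ξ p.1 - ξ p.2)^2 / (p.1 - p.2)^2)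
      ((volume.restrict (Set.Ioo ε X)).prod (volume.restrict (Set.Ioo (-X) (-ε)))) := by
    haveI : IsFiniteMeasure (volume.restrict (Set.Ioo ε X)) :=
      ⟨by rw [Measure.restrict_apply_univ]; exact measure_Ioo_lt_top⟩
    haveI : IsFiniteMeasure (volume.restrict (Set.Ioo (-X) (-ε))) :=
      ⟨by rw [Measure.restrict_apply_univ]; exact measure_Ioo_lt_top⟩
    apply Integrable.mono' (g := fun _ => L^2) (integrable_const _) hHm.aestronglyMeasurable
    filter_upwards with p
    rw [Real.norm_eq_abs, abs_of_nonneg (hHnn p.1 p.2)]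
    exact hHbd p.1 p.2
  have hF1int : IntegrableOn (fun x => ∫ y in Set.Ioo (-X) (-ε), (ξ x - ξ y)^2 / (x - y)^2)
      (Set.Ioo ε X) := hq1prod.integral_prod_left
  have step3 : ∫ x in Set.Ioo ε X, ∫ y in Set.Ioo (-X) (-ε), (ξ x - ξ y)^2 / (x - y)^2
      ≤ ∫ x in Set.Ioo ε X, ∫ y in S, (ξ x - ξ y)^2 / (x - y)^2 := by
    apply setIntegral_mono_on hF1int (hFint.mono_set hsub2) measurableSet_Ioo
    intro x _
    apply setIntegral_mono_set (hinnerInt x S measurableSet_Ioo measure_Ioo_lt_top)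
      (Filter.Eventually.of_forall fun y => hHnn x y) hsub1.eventuallyLE
  have hquad1 := quadrant hε hX2 hc hb B1 B2
  -- quadrant 2 via symmetry
  set η : ℝ → ℝ := fun t => -ξ (-t) with hη
  have hηc : Continuous η := (hc.comp continuous_neg).neg
  have hηb : ∀ x, |η x| ≤ 1 := fun x => by rw [hη]; simpa [abs_neg] using hb (-x)
  have hB1η : ∀ x, ε ≤ x → 1 - 2*Real.exp (-(2*x/ε)) ≤ η x := by
    intro x hx
    have := B2 (-x) (by linarith)
    rw [hη]
    have heq : 2*(-x)/ε = -(2*x/ε) := by ring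
    rw [heq] at this
    linarith
  have hB2η : ∀ y, y ≤ -ε → η y ≤ -1 + 2*Real.exp (2*y/ε) := by
    intro y hy
    have := B1 (-y) (by linarith)
    rw [hη]
    have heq : -(2*(-y)/ε) = 2*y/ε := by ring
    rw [heq] at this
    linarith
  have hquad2 := quadrant hε hX2 hηc hηb hB1η hB2η
  -- change of variables
  have hchg : ∫ x in Set.Ioo ε X, ∫ y in Set.Ioo (-X) (-ε), (η x - η y)^2 / (x - y)^2
      = ∫ x in Set.Ioo (-X) (-ε), ∫ y in Set.Ioo ε X, (ξ x - ξ y)^2 / (x - y)^2 := by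
    set K : ℝ → ℝ := fun x => ∫ y in Set.Ioo ε X, (ξ x - ξ y)^2 / (x - y)^2 with hK
    have key : ∀ x : ℝ, (∫ y in Set.Ioo (-X) (-ε), (η x - η y)^2 / (x - y)^2) = K (-x) := by
      intro x
      rw [hK]
      beta_reduce
      rw [← MeasureTheory.integral_Ioc_eq_integral_Ioo,
        ← intervalIntegral.integral_of_le (by linarith : -X ≤ -ε),
        ← MeasureTheory.integral_Ioc_eq_integral_Ioo,
        ← intervalIntegral.integral_of_le hεX.le]
      have hcn := intervalIntegral.integral_comp_neg (a := -X) (b := -ε)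
        (f := fun y => (ξ (-x) - ξ y)^2 / ((-x) - y)^2)
      simp only [neg_neg] at hcn
      rw [← hcn]
      apply intervalIntegral.integral_congr
      intro y _
      simp only [hη]
      congr 1 <;> ring
    calc ∫ x in Set.Ioo ε X, ∫ y in Set.Ioo (-X) (-ε), (η x - η y)^2 / (x - y)^2
        = ∫ x in Set.Ioo ε X, K (-x) := by
          rw [show (fun x => ∫ y in Set.Ioo (-X) (-ε), (η x - η y)^2 / (x - y)^2)
            = fun x => K (-x) from funext key]
      _ = ∫ x in ε..X, K (-x) := by
          rw [intervalIntegral.integral_of_le hεX.le, MeasureTheory.integral_Ioc_eq_integral_Ioo]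
      _ = ∫ x in (-X)..(-ε), K x := intervalIntegral.integral_comp_neg K
      _ = ∫ x in Set.Ioo (-X) (-ε), K x := by
          rw [intervalIntegral.integral_of_le (by linarith : -X ≤ -ε),
            MeasureTheory.integral_Ioc_eq_integral_Ioo]
  have hq2prod : Integrable (fun p : ℝ × ℝ => (ξ p.1 - ξ p.2)^2 / (p.1 - p.2)^2)
      ((volume.restrict (Set.Ioo (-X) (-ε))).prod (volume.restrict (Set.Ioo ε X))) := by
    haveI : IsFiniteMeasure (volume.restrict (Set.Ioo (-X) (-ε))) :=
      ⟨by rw [Measure.restrict_apply_univ]; exact measure_Ioo_lt_top⟩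
    haveI : IsFiniteMeasure (volume.restrict (Set.Ioo ε X)) :=
      ⟨by rw [Measure.restrict_apply_univ]; exact measure_Ioo_lt_top⟩
    apply Integrable.mono' (g := fun _ => L^2) (integrable_const _) hHm.aestronglyMeasurable
    filter_upwards with p
    rw [Real.norm_eq_abs, abs_of_nonneg (hHnn p.1 p.2)]
    exact hHbd p.1 p.2
  have hF2int : IntegrableOn (fun x => ∫ y in Set.Ioo ε X, (ξ x - ξ y)^2 / (x - y)^2)
      (Set.Ioo (-X) (-ε)) := hq2prod.integral_prod_left
  have step5 : ∫ x in Set.Ioo (-X) (-ε), ∫ y in Set.Ioo ε X, (ξ x - ξ y)^2 / (x - y)^2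
      ≤ ∫ x in Set.Ioo (-X) (-ε), ∫ y in S, (ξ x - ξ y)^2 / (x - y)^2 := by
    apply setIntegral_mono_on hF2int (hFint.mono_set hsub1) measurableSet_Ioo
    intro x _
    apply setIntegral_mono_set (hinnerInt x S measurableSet_Ioo measure_Ioo_lt_top)
      (Filter.Eventually.of_forall fun y => hHnn x y) hsub2.eventuallyLE
  -- combine
  have htotal : 2*(4*Real.log X - 4*Real.log ε - 8*Real.log 2 - 4*Real.exp (-2))
      ≤ ∫ x in S, ∫ y in S, (ξ x - ξ y)^2 / (x - y)^2 := by
    rw [hchg] at hquad2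
    calc 2*(4*Real.log X - 4*Real.log ε - 8*Real.log 2 - 4*Real.exp (-2))
        ≤ (∫ x in Set.Ioo (-X) (-ε), ∫ y in Set.Ioo ε X, (ξ x - ξ y)^2 / (x - y)^2)
          + ∫ x in Set.Ioo ε X, ∫ y in Set.Ioo (-X) (-ε), (ξ x - ξ y)^2 / (x - y)^2 := by
          linarith
      _ ≤ (∫ x in Set.Ioo (-X) (-ε), ∫ y in S, (ξ x - ξ y)^2 / (x - y)^2)
          + ∫ x in Set.Ioo ε X, ∫ y in S, (ξ x - ξ y)^2 / (x - y)^2 := by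
          linarith [step3, step5]
      _ = ∫ x in Set.Ioo (-X) (-ε) ∪ Set.Ioo ε X, ∫ y in S, (ξ x - ξ y)^2 / (x - y)^2 :=
          step2.symm
      _ ≤ _ := step1
  refine le_trans ?_ htotal
  -- final arithmetic
  have h12 : Real.log (1/12 * X / ε) = Real.log (1/12) + Real.log X - Real.log ε := by
    rw [Real.log_div (by positivity) hε.ne', Real.log_mul (by norm_num) hXpos.ne']
  have hlog12 : Real.log (1/12) = -Real.log 12 := by
    rw [Real.log_div (by norm_num) (by norm_num), Real.log_one]; ring
  have hlog12' : Real.log 12 = 2*Real.log 2 + Real.log 3 := by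
    rw [show (12:ℝ) = 2*2*3 by norm_num, Real.log_mul (by norm_num) (by norm_num),
      Real.log_mul (by norm_num) (by norm_num)]
    ring
  have hlog3 : (1:ℝ) ≤ Real.log 3 := by
    rw [Real.le_log_iff_exp_le (by norm_num)]
    exact (Real.exp_one_lt_d9.le).trans (by norm_num)
  have hexp2 : Real.exp (-2:ℝ) ≤ 1/2 := exp_neg_two_le_half
  rw [h12, hlog12, hlog12']
  linarith
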